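/- Let p be an odd prime, k ≥ 1 an integer, and b ∈ ℤ_p a p-adic unit. Then there exists a p-adic unit c ∈ ℤ_p^× such that 1 + b·p^k = (1 + p·c)^{p^{k-1}} in ℤ_p. -/

import Mathlib

open Polynomial Finset

lemma exists_H (p : ℕ) [hpp : Fact p.Prime] (hp : Odd p) (k : ℕ) (hk : 1 ≤ k) :
    ∃ H : Polynomial ℤ_[p],
      (C ((p:ℤ_[p])^k) * X + 1) ^ p
        = 1 + C ((p:ℤ_[p])^(k+1)) * X + C ((p:ℤ_[p])^(2*k+1)) * H := by
  have h2 := hpp.out.two_le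
  have hodd := Nat.odd_iff.mp hp
  have hp3 : 3 ≤ p := by omega
  obtain ⟨m, hm⟩ : ∃ m, p = m + 2 := ⟨p - 2, by omega⟩
  have key : (C ((p:ℤ_[p])^(2*k+1)) : Polynomial ℤ_[p]) ∣
      ∑ i ∈ range (m+1), (C ((p:ℤ_[p])^k) * X) ^ (i+1+1) * 1 ^ (p - (i+1+1)) * ((p.choose (i+1+1) : ℕ) : Polynomial ℤ_[p]) := by
    apply Finset.dvd_sum
    intro i hi
    simp only [one_pow, mul_one]
    have hle : i + 1 + 1 ≤ p := by simp at hi; omega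
    rw [mul_pow, ← C_pow, ← pow_mul]
    rcases eq_or_lt_of_le hle with heq | hlt
    · have hc1 : p.choose (i+1+1) = 1 := by rw [heq]; exact Nat.choose_self p
      rw [hc1, Nat.cast_one, mul_one]
      refine dvd_mul_of_dvd_left (_root_.map_dvd C (pow_dvd_pow _ ?_)) _
      rw [← heq] at hp3
      calc 2*k+1 ≤ 3*k := by omega
        _ = k*3 := mul_comm _ _
        _ ≤ k*(i+1+1) := Nat.mul_le_mul_left k hp3
    · have hdvd : p ∣ p.choose (i+1+1) := hpp.out.dvd_choose_self (by omega) hlt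
      obtain ⟨t, ht⟩ := hdvd
      rw [ht]
      push_cast
      have he : ((p:ℤ_[p]) ^ (2*k+1)) = ↑p^(2*k) * ↑p := by ring
      rw [he, C_mul]
      refine mul_dvd_mul (dvd_mul_of_dvd_left (_root_.map_dvd C (pow_dvd_pow _ ?_)) _) ?_
      · calc 2*k = k*2 := mul_comm _ _
          _ ≤ k*(i+1+1) := Nat.mul_le_mul_left k (by omega)
      · rw [← C_eq_natCast]; exact dvd_mul_right _ _
  obtain ⟨H, hH⟩ := key
  refine ⟨H, ?_⟩
  rw [add_pow]
  rw [show p + 1 = (m+1) + 1 + 1 from by omega]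
  rw [Finset.sum_range_succ', Finset.sum_range_succ']
  rw [hH]
  simp only [pow_zero, one_mul, one_pow, mul_one, pow_one, Nat.choose_zero_right,
    Nat.choose_one_right, Nat.cast_one]
  simp only [zero_add, Nat.choose_one_right, ← C_eq_natCast]
  rw [show C ((p:ℤ_[p])^(k+1)) = C ((p:ℤ_[p])^k) * C (p:ℤ_[p]) from by rw [← C_mul, ← pow_succ]]
  ring


lemma aux_norm (p : ℕ) [Fact p.Prime] (u x : ℤ_[p]) (hu : ‖u‖ = 1) (hx : ‖x‖ < 1) :
    ‖u + x‖ = 1 := by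
  rw [PadicInt.norm_add_eq_max_of_ne (by rw [hu]; exact fun h => absurd hx (by rw [← h]; exact lt_irrefl _)),
    hu, max_eq_left (le_of_lt hx)]

theorem stmt_0 (p : ℕ) [Fact p.Prime] (hp : Odd p) (k : ℕ) (hk : 1 ≤ k) (b : ℤ_[p]ˣ) :
    ∃ c : ℤ_[p]ˣ, (1 + (b : ℤ_[p]) * (p : ℤ_[p]) ^ k) = (1 + (p : ℤ_[p]) * c) ^ (p ^ (k - 1)) := by
  induction k, hk using Nat.le_induction generalizing b with
  | base =>
    refine ⟨b, ?_⟩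
    simp [mul_comm]
  | succ k hk ih =>
    obtain ⟨H, hH⟩ := exists_H p hp k hk
    have hnormp : ‖(p:ℤ_[p])^k‖ < 1 := by
      rw [PadicInt.norm_p_pow, zpow_neg, zpow_natCast]
      have h1 : (1:ℝ) < (p:ℝ) := by exact_mod_cast (Fact.out : p.Prime).one_lt
      have h2 : (1:ℝ) < (p:ℝ)^k := one_lt_pow₀ h1 (by omega)
      rw [inv_lt_one_iff₀]
      right
      exact h2
    have hmul : ∀ y : ℤ_[p], ‖(p:ℤ_[p])^k * y‖ < 1 := by
      intro y
      rw [norm_mul]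
      calc ‖(p:ℤ_[p])^k‖ * ‖y‖ ≤ ‖(p:ℤ_[p])^k‖ * 1 :=
            mul_le_mul_of_nonneg_left (PadicInt.norm_le_one _) (norm_nonneg _)
        _ < 1 := by rw [mul_one]; exact hnormp
    set G : Polynomial ℤ_[p] := X - C (b : ℤ_[p]) + C ((p:ℤ_[p])^k) * H with hG
    have hderiv : G.derivative = 1 + C ((p:ℤ_[p])^k) * H.derivative := by
      rw [hG, derivative_add, derivative_sub, derivative_X, derivative_C, sub_zero,
        derivative_C_mul]
    have hnd : ‖G.derivative.eval ↑b‖ = 1 := by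
      rw [hderiv]
      simp only [eval_add, eval_one, eval_mul, eval_C]
      exact aux_norm p _ _ norm_one (hmul _)
    have hnf : ‖G.eval ↑b‖ < ‖G.derivative.eval ↑b‖ ^ 2 := by
      rw [hnd, one_pow, hG]
      simp only [eval_add, eval_sub, eval_X, eval_C, eval_mul, sub_self, zero_add]
      exact hmul _
    obtain ⟨z, hz0, hz1, -, -⟩ := hensels_lemma hnf
    rw [Polynomial.coe_aeval_eq_eval, hnd] at hz1
    have hznorm : ‖z‖ = 1 := by
      have hz : z = ↑b + (z - ↑b) := by ring
      rw [hz]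
      exact aux_norm p _ _ (PadicInt.norm_units b) hz1
    have hzu : IsUnit z := PadicInt.isUnit_iff.mpr hznorm
    obtain ⟨c, hc⟩ := ih hzu.unit
    rw [hzu.unit_spec] at hc
    refine ⟨c, ?_⟩
    have hGz : z - ↑b + (p:ℤ_[p])^k * H.eval z = 0 := by
      have h0 := hz0
      rw [hG] at h0
      simpa using h0
    have hEv : ((p:ℤ_[p])^k * z + 1) ^ p
        = 1 + (p:ℤ_[p])^(k+1) * z + (p:ℤ_[p])^(2*k+1) * H.eval z := by
      have h1 := congrArg (eval z) hH
      simpa using h1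
    have hk1 : k + 1 - 1 = k := by omega
    rw [hk1]
    have hkk : p ^ k = p ^ (k-1) * p := by
      rw [← pow_succ]; congr 1; omega
    rw [hkk, pow_mul, ← hc]
    rw [show (1 : ℤ_[p]) + z * ↑p ^ k = (p:ℤ_[p])^k * z + 1 from by ring]
    rw [hEv]
    linear_combination (-((p:ℤ_[p])^(k+1))) * hGz
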